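/- There is no pair of quadruples of affine (degree ≤ 1) polynomials φ₁, φ₂, χ₁, χ₂ on [0,1] satisfying simultaneously: φ₁(0)=1, φ₂(0)=0, χ₁(1)=1, χ₂(1)=0, ∫₀¹ χ₁ φ₁' dt − φ₁(1) = −1, ∫₀¹ χ₁ φ₂' dt − φ₂(1) = 0, ∫₀¹ χ₂ φ₁' dt = −1, ∫₀¹ χ₂ φ₂' dt = 1, ∫₀¹ χ₁ φ₁ dt = 1 − 1/(2α), ∫₀¹ χ₁ φ₂ dt = 1/(2α), ∫₀¹ χ₂ φ₁ dt = α, ∫₀¹ χ₂ φ₂ dt = 0, for any α ≠ 0. -/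
import Mathlib

open MeasureTheory

private lemma deriv_affine (p q : ℝ) : deriv (fun t : ℝ => p + q * t) = fun _ => q := by
  funext t
  have h : HasDerivAt (fun t : ℝ => p + q * t) q t := by
    simpa using ((hasDerivAt_id t).const_mul q).const_add p
  exact h.deriv

private lemma int_quad (a b c : ℝ) :
    (∫ t in (0:ℝ)..1, (a + b * t + c * t ^ 2)) = a + b / 2 + c / 3 := by
  have h : (∫ t in (0:ℝ)..1, (a + b * t + c * t ^ 2)) =
      (∫ t in (0:ℝ)..1, a) + (∫ t in (0:ℝ)..1, b * t) + (∫ t in (0:ℝ)..1, c * t ^ 2) := by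
    rw [intervalIntegral.integral_add, intervalIntegral.integral_add] <;>
      exact (by continuity : Continuous _).intervalIntegrable _ _
  have hid : (∫ t in (0:ℝ)..1, b * t) = b / 2 := by
    rw [intervalIntegral.integral_const_mul, _root_.integral_id]; ring
  rw [h, hid]
  simp [intervalIntegral.integral_const_mul, _root_.integral_pow]
  ring

theorem two_stage_RK_no_affine_solution :
    ¬ ∃ (α p₁ q₁ p₂ q₂ r₁ s₁ r₂ s₂ : ℝ), α ≠ 0 ∧
      (let φ₁ : ℝ → ℝ := fun t => p₁ + q₁ * t
       let φ₂ : ℝ → ℝ := fun t => p₂ + q₂ * t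
       let χ₁ : ℝ → ℝ := fun t => r₁ + s₁ * t
       let χ₂ : ℝ → ℝ := fun t => r₂ + s₂ * t
       φ₁ 0 = 1 ∧ φ₂ 0 = 0 ∧ χ₁ 1 = 1 ∧ χ₂ 1 = 0 ∧
       (∫ t in (0:ℝ)..1, χ₁ t * deriv φ₁ t) - φ₁ 1 = -1 ∧
       (∫ t in (0:ℝ)..1, χ₁ t * deriv φ₂ t) - φ₂ 1 = 0 ∧
       (∫ t in (0:ℝ)..1, χ₂ t * deriv φ₁ t) = -1 ∧
       (∫ t in (0:ℝ)..1, χ₂ t * deriv φ₂ t) = 1 ∧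
       (∫ t in (0:ℝ)..1, χ₁ t * φ₁ t) = 1 - 1 / (2 * α) ∧
       (∫ t in (0:ℝ)..1, χ₁ t * φ₂ t) = 1 / (2 * α) ∧
       (∫ t in (0:ℝ)..1, χ₂ t * φ₁ t) = α ∧
       (∫ t in (0:ℝ)..1, χ₂ t * φ₂ t) = 0) := by
  rintro ⟨α, p₁, q₁, p₂, q₂, r₁, s₁, r₂, s₂, hα,
    h1, h2, h3, h4, h5, h6, h7, h8, h9, h10, h11, h12⟩
  simp only [deriv_affine] at h5 h6 h7 h8
  have e1 : ∀ r s q : ℝ, (∫ t in (0:ℝ)..1, (r + s * t) * q) = r * q + (s * q) / 2 := by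
    intro r s q
    have : (∫ t in (0:ℝ)..1, (r + s * t) * q)
        = ∫ t in (0:ℝ)..1, (r * q + (s * q) * t + 0 * t ^ 2) := by
      apply intervalIntegral.integral_congr; intro t _; ring
    rw [this, int_quad]; ring
  have e2 : ∀ r s p q : ℝ, (∫ t in (0:ℝ)..1, (r + s * t) * (p + q * t))
      = r * p + (r * q + s * p) / 2 + (s * q) / 3 := by
    intro r s p q
    have : (∫ t in (0:ℝ)..1, (r + s * t) * (p + q * t))
        = ∫ t in (0:ℝ)..1, (r * p + (r * q + s * p) * t + (s * q) * t ^ 2) := by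
      apply intervalIntegral.integral_congr; intro t _; ring
    rw [this, int_quad]
  rw [e1] at h5 h6 h7 h8
  rw [e2] at h9 h10 h11 h12
  simp only [mul_zero, add_zero, mul_one, zero_add] at h1 h2 h3 h4 h5 h6 h7 h8
  -- pure algebra from here
  have hq₁ : q₁ ≠ 0 := by
    rintro rfl; simp at h7
  have hs₁ : s₁ = 0 := by
    have hz : q₁ * s₁ = 0 := by linear_combination (-2) * h5 + 2 * q₁ * h3 - 2 * h1
    rcases mul_eq_zero.mp hz with h | h
    · exact absurd h hq₁
    · exact h
  have hr₁ : r₁ = 1 := by linarith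
  rw [hs₁, hr₁, h2] at h10
  -- h10 : 1 * 0 + (1 * q₂ + 0 * 0) / 2 + 0 * q₂ / 3 = 1 / (2 * α)
  have h10' : q₂ * α = 1 := by
    field_simp at h10
    linarith
  have h7' : s₂ * q₁ = 2 := by linear_combination (-2) * h7 + 2 * q₁ * h4
  have h8' : s₂ * q₂ = -2 := by linear_combination (-2) * h8 + 2 * q₂ * h4
  have hs2v : s₂ = -2 * α := by linear_combination α * h8' - s₂ * h10'
  have : (1 : ℝ) / 3 = 0 := by
    linear_combination (-1) * h11 + (r₂ + s₂ / 2) * h1 + (1 + q₁ / 2) * h4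
      + (-1 / 6) * h7' + (-1 / 2) * hs2v
  norm_num at this
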